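/- Let k be a commutative ring, let n be a positive natural number, and let R be a k-algebra generated as a k-algebra by n elements r_1, ..., r_n. Then the algebra of (n+2) × (n+2) matrices over R is generated as a k-algebra by two elements. (One may take one generator to be the permutation matrix cyclically permuting the n+2 coordinates, and the other to be the matrix whose first row is (0, r_1, ..., r_n, 0), whose second row is (1, 0, ..., 0), and whose remaining rows are zero.) -/

import Mathlib

open Matrix
open Fin.NatCast Fin.CommRing

section aux
variable {R : Type*} [Ring R] {m : ℕ}

/-- the cyclic shift matrix -/
private def shiftM (R : Type*) [Ring R] (m : ℕ) : Matrix (Fin (m + 2)) (Fin (m + 2)) R :=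
  ∑ l : Fin (m + 2), Matrix.single (l + 1) l 1

private lemma shiftM_mul (i j : Fin (m + 2)) (x : R) :
    shiftM R m * Matrix.single i j x = Matrix.single (i + 1) j x := by
  rw [shiftM, Finset.sum_mul]
  rw [Finset.sum_eq_single i]
  · rw [single_mul_single_same, one_mul]
  · intro l _ hl
    exact single_mul_single_of_ne _ _ _ _ hl x
  · simp

private lemma mul_shiftM (i j : Fin (m + 2)) (x : R) :
    Matrix.single i j x * shiftM R m = Matrix.single i (j - 1) x := by
  rw [shiftM, Finset.mul_sum]
  rw [Finset.sum_eq_single (j - 1)]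
  · rw [show (j - 1) + 1 = j by ring, single_mul_single_same, mul_one]
  · intro l _ hl
    refine single_mul_single_of_ne _ _ _ _ (fun h => hl ?_) 1
    rw [h]; ring
  · simp

private lemma shiftM_pow_mul (s : ℕ) (i j : Fin (m + 2)) (x : R) :
    (shiftM R m) ^ s * Matrix.single i j x = Matrix.single (i + (s : Fin (m + 2))) j x := by
  induction s with
  | zero => simp
  | succ t ih =>
    rw [pow_succ', mul_assoc, ih, shiftM_mul]
    congr 1
    push_cast
    ring

private lemma mul_shiftM_pow (s : ℕ) (i j : Fin (m + 2)) (x : R) :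
    Matrix.single i j x * (shiftM R m) ^ s = Matrix.single i (j - (s : Fin (m + 2))) x := by
  induction s with
  | zero => simp
  | succ t ih =>
    rw [pow_succ, ← mul_assoc, ih, mul_shiftM]
    congr 1
    push_cast
    ring

end aux

/-- If a `k`-algebra `R` is generated by `n ≥ 1` elements
`r 0, …, r (n-1)`, then the `(n+2) × (n+2)` matrix algebra over `R` is generated
as a `k`-algebra by two elements. -/
theorem matrix_algebra_two_generators
    (k : Type*) [CommRing k] (R : Type*) [Ring R] [Algebra k R]
    (n : ℕ) (hn : 0 < n) (r : Fin n → R)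
    (hr : Algebra.adjoin k (Set.range r) = ⊤) :
    ∃ a b : Matrix (Fin (n + 2)) (Fin (n + 2)) R,
      Algebra.adjoin k ({a, b} : Set (Matrix (Fin (n + 2)) (Fin (n + 2)) R)) = ⊤ := by
  set ι : Fin n → Fin (n + 2) := fun j => ⟨j.val + 1, by omega⟩ with hι
  set a : Matrix (Fin (n + 2)) (Fin (n + 2)) R := shiftM R n with ha_def
  set b : Matrix (Fin (n + 2)) (Fin (n + 2)) R :=
    Matrix.single 1 0 1 + ∑ j : Fin n, Matrix.single 0 (ι j) (r j) with hb_def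
  refine ⟨a, b, ?_⟩
  set S := Algebra.adjoin k ({a, b} : Set (Matrix (Fin (n + 2)) (Fin (n + 2)) R)) with hS
  have ha : a ∈ S := Algebra.subset_adjoin (Set.mem_insert _ _)
  have hb : b ∈ S := Algebra.subset_adjoin (Set.mem_insert_of_mem _ rfl)
  -- basic index facts
  have hcval : (((n + 1 : ℕ) : Fin (n + 2)) : ℕ) = n + 1 := by
    rw [Fin.val_natCast, Nat.mod_eq_of_lt (by omega)]
  have hone : ((1 : Fin (n + 2)) : ℕ) = 1 := by
    rw [Fin.val_one]
  have hc0 : ((n + 1 : ℕ) : Fin (n + 2)) ≠ 0 := by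
    rw [Fin.ne_iff_vne, hcval]; simp
  have hιne0 : ∀ j : Fin n, ι j ≠ 0 := fun j => by
    rw [Fin.ne_iff_vne]; simp [hι]
  have hιnec : ∀ j : Fin n, ι j ≠ ((n + 1 : ℕ) : Fin (n + 2)) := fun j => by
    rw [Fin.ne_iff_vne, hcval, show (ι j).val = j.val + 1 from rfl]
    have := j.isLt; omega
  have h0nec : (0 : Fin (n + 2)) ≠ ((n + 1 : ℕ) : Fin (n + 2)) := fun h => hc0 h.symm
  have hιinj : Function.Injective ι := fun x y h => by
    rw [Fin.ext_iff] at h ⊢; simpa [hι] using h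
  -- the element d = a^(n+1) * b
  have hd_eq : a ^ (n + 1) * b =
      Matrix.single 0 0 1 + ∑ j : Fin n, Matrix.single ((n + 1 : ℕ) : Fin (n + 2)) (ι j) (r j) := by
    rw [hb_def, mul_add, Finset.mul_sum, ha_def]
    congr 1
    · rw [shiftM_pow_mul]
      congr 1
      rw [show (1 : Fin (n + 2)) + ((n + 1 : ℕ) : Fin (n + 2)) = 0 by
        rw [show (1 : Fin (n + 2)) = ((1 : ℕ) : Fin (n + 2)) by simp, ← Nat.cast_add,
          show 1 + (n + 1) = n + 2 by omega, Fin.natCast_self]]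
    · refine Finset.sum_congr rfl fun j _ => ?_
      rw [shiftM_pow_mul, zero_add]
  have hd : a ^ (n + 1) * b ∈ S := S.mul_mem (pow_mem ha _) hb
  -- E00 = d * d
  have hE00_eq : (a ^ (n + 1) * b) * (a ^ (n + 1) * b) = Matrix.single (0 : Fin (n+2)) 0 (1 : R) := by
    have h1 : ∀ j ∈ Finset.univ, Matrix.single (0 : Fin (n+2)) 0 (1:R) *
        Matrix.single ((n + 1 : ℕ) : Fin (n + 2)) (ι j) (r j) = 0 := fun j _ => by
      exact single_mul_single_of_ne _ _ _ _ h0nec _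
    have h2 : ∀ j ∈ Finset.univ, Matrix.single ((n + 1 : ℕ) : Fin (n + 2)) (ι j) (r j) *
        (Matrix.single (0 : Fin (n+2)) 0 (1:R) +
          ∑ j' : Fin n, Matrix.single ((n + 1 : ℕ) : Fin (n + 2)) (ι j') (r j')) = 0 := fun j _ => by
      rw [mul_add, single_mul_single_of_ne _ _ _ _ (hιne0 j), Finset.mul_sum, zero_add]
      exact Finset.sum_eq_zero fun j' _ => single_mul_single_of_ne _ _ _ _ (hιnec j) _
    rw [hd_eq, add_mul, mul_add, single_mul_single_same, one_mul, Finset.mul_sum,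
      Finset.sum_eq_zero h1, Finset.sum_mul, Finset.sum_eq_zero h2, add_zero, add_zero]
  have hE00 : Matrix.single (0 : Fin (n+2)) 0 (1 : R) ∈ S := by
    rw [← hE00_eq]; exact S.mul_mem hd hd
  -- all matrix units
  have hunit : ∀ i j : Fin (n + 2), Matrix.single i j (1 : R) ∈ S := by
    intro i j
    have key : a ^ (i : ℕ) * Matrix.single (0 : Fin (n+2)) 0 (1 : R) * a ^ (n + 2 - (j : ℕ)) =
        Matrix.single i j 1 := by
      rw [ha_def, shiftM_pow_mul, zero_add, Fin.cast_val_eq_self, mul_shiftM_pow]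
      congr 1
      rw [Nat.cast_sub (by omega), Fin.natCast_self, sub_sub_cancel, Fin.cast_val_eq_self]
    rw [← key]
    exact S.mul_mem (S.mul_mem (pow_mem ha _) hE00) (pow_mem ha _)
  -- E00(r j) ∈ S
  have hrj : ∀ j : Fin n, Matrix.single (0 : Fin (n+2)) 0 (r j) ∈ S := by
    intro j
    have key : (Matrix.single (0 : Fin (n+2)) 0 (1 : R) * b) * Matrix.single (ι j) 0 1 =
        Matrix.single (0 : Fin (n+2)) 0 (r j) := by
      have h01 : (0 : Fin (n+2)) ≠ 1 := by rw [Fin.ne_iff_vne, hone]; simp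
      rw [hb_def, mul_add, Finset.mul_sum, add_mul,
        single_mul_single_of_ne _ _ _ _ h01, zero_mul, zero_add, Finset.sum_mul]
      simp only [single_mul_single_same, one_mul]
      rw [Finset.sum_eq_single j]
      · rw [single_mul_single_same, mul_one]
      · intro j' _ hj'
        exact single_mul_single_of_ne _ _ _ _ (fun h => hj' (hιinj h)) _
      · simp
    rw [← key]
    exact S.mul_mem (S.mul_mem hE00 hb) (hunit _ _)
  -- E00(x) ∈ S for all x
  have hall0 : ∀ x : R, Matrix.single (0 : Fin (n+2)) 0 x ∈ S := by
    intro x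
    let T : Subalgebra k R :=
      { carrier := {x | Matrix.single (0 : Fin (n+2)) 0 x ∈ S}
        mul_mem' := fun {p q} hp hq => by
          have := S.mul_mem hp hq
          rwa [single_mul_single_same] at this
        add_mem' := fun {p q} hp hq => by
          have := S.add_mem hp hq
          rwa [← single_add] at this
        algebraMap_mem' := fun c => by
          show Matrix.single (0 : Fin (n+2)) 0 (algebraMap k R c) ∈ S
          rw [Algebra.algebraMap_eq_smul_one, ← smul_single]
          exact S.smul_mem hE00 c }
    have hT : (⊤ : Subalgebra k R) ≤ T := by
      rw [← hr]
      exact Algebra.adjoin_le (fun y ⟨j, hj⟩ => by rw [← hj]; exact hrj j)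
    exact hT trivial
  -- all Matrix.single
  have hall : ∀ (i j : Fin (n + 2)) (x : R), Matrix.single i j x ∈ S := by
    intro i j x
    have key : Matrix.single i (0 : Fin (n+2)) (1:R) * Matrix.single (0 : Fin (n+2)) 0 x *
        Matrix.single (0 : Fin (n+2)) j 1 = Matrix.single i j x := by
      rw [single_mul_single_same, single_mul_single_same, one_mul, mul_one]
    rw [← key]
    exact S.mul_mem (S.mul_mem (hunit _ _) (hall0 x)) (hunit _ _)
  rw [eq_top_iff]
  intro M _
  rw [matrix_eq_sum_single M]
  exact Subalgebra.sum_mem S fun i _ => Subalgebra.sum_mem S fun j _ => hall i j _
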